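/- If G is a finite simple graph without isolated vertices, then γ_t(G) ≤ γ_Lg(G) ≤ 2γ_t(G) − 1. -/
import Mathlib


/- Formalization of the domination games from "The variety of domination games".

A game is specified by a legality predicate `legal : List V → V → Prop`, where the list
records the previously played vertices (most recent first).  Players alternate moves;
each move must be legal; the game ends when no legal move exists.  Dominator wants to
minimize, Staller to maximize, the total number of moves.

`canEnd legal k turn h` states that, with history `h` and the player to move given by
`turn` (`true` = Dominator), Dominator can guarantee that at most `k` further moves are
played (against any play of Staller).  The value of the game under optimal play by both
players is then the least such `k` from the empty history. -/

/-- The closed neighborhood `N[v]` of a vertex. -/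
def closedNbhd {V : Type*} (G : SimpleGraph V) (v : V) : Set V :=
  insert v (G.neighborSet v)

/-- `⋃_{u ∈ h} N[u]` : the set of vertices dominated by the moves in `h`. -/
def dominatedBy {V : Type*} (G : SimpleGraph V) (h : List V) : Set V :=
  ⋃ u ∈ h, closedNbhd G u

/-- `⋃_{u ∈ h} N(u)` : the set of vertices totally dominated by the moves in `h`. -/
def totDominatedBy {V : Type*} (G : SimpleGraph V) (h : List V) : Set V :=
  ⋃ u ∈ h, G.neighborSet u

/-- Legality in the domination game: `N[v] \ ⋃_{j<i} N[v_j] ≠ ∅`. -/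
def dgLegal {V : Type*} (G : SimpleGraph V) (h : List V) (v : V) : Prop :=
  (closedNbhd G v \ dominatedBy G h).Nonempty

/-- Legality in the total domination game: `N(v) \ ⋃_{j<i} N(v_j) ≠ ∅`. -/
def tgLegal {V : Type*} (G : SimpleGraph V) (h : List V) (v : V) : Prop :=
  (G.neighborSet v \ totDominatedBy G h).Nonempty

/-- Legality in the Z-domination game on `G|A`: `N(v) \ (A ∪ ⋃_{j<i} N[v_j]) ≠ ∅`. -/
def zLegal {V : Type*} (G : SimpleGraph V) (A : Set V) (h : List V) (v : V) : Prop :=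
  (G.neighborSet v \ (A ∪ dominatedBy G h)).Nonempty

/-- Legality in the LL-domination game on `G|A`: `N[v] \ (A ∪ ⋃_{j<i} N(v_j)) ≠ ∅`. -/
def llLegal {V : Type*} (G : SimpleGraph V) (A : Set V) (h : List V) (v : V) : Prop :=
  (closedNbhd G v \ (A ∪ totDominatedBy G h)).Nonempty

/-- Legality in the L-domination game on `G|A`: as in the LL-game, and moreover no vertex
may be played twice. -/
def lLegal {V : Type*} (G : SimpleGraph V) (A : Set V) (h : List V) (v : V) : Prop :=
  llLegal G A h v ∧ v ∉ h

/-- `canEnd legal k turn h` : with previously played vertices `h` and the player to move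
given by `turn` (`true` = Dominator, `false` = Staller), Dominator has a strategy
guaranteeing that at most `k` further moves are made. -/
def canEnd {V : Type*} (legal : List V → V → Prop) : ℕ → Bool → List V → Prop
  | 0, _, h => ∀ v, ¬ legal h v
  | k+1, true, h => (∀ v, ¬ legal h v) ∨ ∃ v, legal h v ∧ canEnd legal k false (v :: h)
  | k+1, false, h => ∀ v, legal h v → canEnd legal k true (v :: h)

/-- The number of moves in the game with legality predicate `legal` when both players play
optimally (Dominator minimizing, Staller maximizing the number of moves); `dFirst = true`
means Dominator makes the first move. -/
noncomputable def gameVal {V : Type*} (legal : List V → V → Prop) (dFirst : Bool) : ℕ :=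
  sInf {k | canEnd legal k dFirst []}

/-- The game Z-domination number `γ_Zg(G|A)` (Dominator starts). -/
noncomputable def gammaZgA {V : Type*} (G : SimpleGraph V) (A : Set V) : ℕ :=
  gameVal (zLegal G A) true

/-- The Staller-start game Z-domination number `γ'_Zg(G|A)`. -/
noncomputable def gammaZgA' {V : Type*} (G : SimpleGraph V) (A : Set V) : ℕ :=
  gameVal (zLegal G A) false

/-- The game L-domination number `γ_Lg(G|A)` (Dominator starts). -/
noncomputable def gammaLgA {V : Type*} (G : SimpleGraph V) (A : Set V) : ℕ :=
  gameVal (lLegal G A) true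

/-- The Staller-start game L-domination number `γ'_Lg(G|A)`. -/
noncomputable def gammaLgA' {V : Type*} (G : SimpleGraph V) (A : Set V) : ℕ :=
  gameVal (lLegal G A) false

/-- The game LL-domination number `γ_LLg(G|A)` (Dominator starts). -/
noncomputable def gammaLLgA {V : Type*} (G : SimpleGraph V) (A : Set V) : ℕ :=
  gameVal (llLegal G A) true

/-- The Staller-start game LL-domination number `γ'_LLg(G|A)`. -/
noncomputable def gammaLLgA' {V : Type*} (G : SimpleGraph V) (A : Set V) : ℕ :=
  gameVal (llLegal G A) false

/-- The game domination number `γ_g(G)` (Dominator starts). -/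
noncomputable def gammaG {V : Type*} (G : SimpleGraph V) : ℕ :=
  gameVal (dgLegal G) true

/-- The game total domination number `γ_tg(G)` (Dominator starts). -/
noncomputable def gammaTg {V : Type*} (G : SimpleGraph V) : ℕ :=
  gameVal (tgLegal G) true

/-- The game Z-domination number `γ_Zg(G)` (Dominator starts). -/
noncomputable def gammaZg {V : Type*} (G : SimpleGraph V) : ℕ := gammaZgA G ∅

/-- The Staller-start game Z-domination number `γ'_Zg(G)`. -/
noncomputable def gammaZg' {V : Type*} (G : SimpleGraph V) : ℕ := gammaZgA' G ∅

/-- The game L-domination number `γ_Lg(G)` (Dominator starts). -/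
noncomputable def gammaLg {V : Type*} (G : SimpleGraph V) : ℕ := gammaLgA G ∅

/-- The Staller-start game L-domination number `γ'_Lg(G)`. -/
noncomputable def gammaLg' {V : Type*} (G : SimpleGraph V) : ℕ := gammaLgA' G ∅

/-- The game LL-domination number `γ_LLg(G)` (Dominator starts). -/
noncomputable def gammaLLg {V : Type*} (G : SimpleGraph V) : ℕ := gammaLLgA G ∅

/-- The Staller-start game LL-domination number `γ'_LLg(G)`. -/
noncomputable def gammaLLg' {V : Type*} (G : SimpleGraph V) : ℕ := gammaLLgA' G ∅

/-- `G` has no isolated vertices. -/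
def isolateFree {V : Type*} (G : SimpleGraph V) : Prop := ∀ v : V, ∃ u, G.Adj v u

/-- The domination number `γ(G)`. -/
noncomputable def domNum {V : Type*} (G : SimpleGraph V) : ℕ :=
  sInf {k | ∃ S : Finset V, S.card = k ∧ ∀ v : V, ∃ u ∈ S, v ∈ closedNbhd G u}

/-- The total domination number `γ_t(G)`. -/
noncomputable def totDomNum {V : Type*} (G : SimpleGraph V) : ℕ :=
  sInf {k | ∃ S : Finset V, S.card = k ∧ ∀ v : V, ∃ u ∈ S, G.Adj u v}

lemma mem_totDom {V : Type*} {G : SimpleGraph V} {h : List V} {w : V} :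
    w ∈ totDominatedBy G h ↔ ∃ u ∈ h, G.Adj u w := by
  simp [totDominatedBy, SimpleGraph.mem_neighborSet]

/-- If some legal move exists, then a legal move from any total dominating set `S`
(not yet played) exists. -/
lemma exists_legal_in_S {V : Type*} {G : SimpleGraph V} {S : Finset V}
    (hS : ∀ v : V, ∃ u ∈ S, G.Adj u v) {h : List V} {v : V}
    (hv : lLegal G ∅ h v) : ∃ u ∈ S, u ∉ h ∧ lLegal G ∅ h u := by
  obtain ⟨⟨w, hw1, hw2⟩, -⟩ := hv
  obtain ⟨u, huS, hadj⟩ := hS w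
  have hwn : w ∉ totDominatedBy G h := fun hc => hw2 (Or.inr hc)
  have hunh : u ∉ h := fun hc => hwn (mem_totDom.mpr ⟨u, hc, hadj⟩)
  refine ⟨u, huS, hunh, ⟨⟨w, ?_, hw2⟩, hunh⟩⟩
  exact Set.mem_insert_iff.mpr (Or.inr hadj)

/-- If the whole total dominating set has been played, no legal move remains. -/
lemma no_legal_of_subset {V : Type*} {G : SimpleGraph V} {S : Finset V}
    (hS : ∀ v : V, ∃ u ∈ S, G.Adj u v) {h : List V}
    (hsub : ∀ u ∈ S, u ∈ h) : ∀ v, ¬ lLegal G ∅ h v := by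
  intro v hv
  obtain ⟨u, huS, hunh, -⟩ := exists_legal_in_S hS hv
  exact hunh (hsub u huS)

/-- At the end of the game, the played vertices totally dominate `V`. -/
lemma terminal_dominates {V : Type*} [DecidableEq V] {G : SimpleGraph V} (hG : isolateFree G)
    {l : List V} (hl : ∀ v, ¬ lLegal G ∅ l v) :
    ∀ w : V, ∃ u ∈ l.toFinset, G.Adj u w := by
  intro w
  by_contra hcon
  push_neg at hcon
  have hwn : w ∉ totDominatedBy G l := by
    intro hc
    obtain ⟨u, hul, hadj⟩ := mem_totDom.mp hc
    exact hcon u (List.mem_toFinset.mpr hul) hadj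
  obtain ⟨u, hadj⟩ := hG w
  have huw : G.Adj u w := hadj.symm
  have hul : u ∉ l := fun hc => hwn (mem_totDom.mpr ⟨u, hc, huw⟩)
  apply hl u
  refine ⟨⟨w, Set.mem_insert_iff.mpr (Or.inr huw), ?_⟩, hul⟩
  rintro (hc | hc)
  · exact hc
  · exact hwn hc

/-- From a `canEnd` certificate one can extract a terminal continuation of bounded
length. -/
lemma canEnd_terminal {V : Type*} (legal : List V → V → Prop) :
    ∀ (k : ℕ) (turn : Bool) (h : List V), canEnd legal k turn h →
      ∃ l : List V, l.length ≤ k ∧ ∀ v, ¬ legal (l ++ h) v := by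
  intro k
  induction k with
  | zero =>
      intro turn h hc
      exact ⟨[], le_refl 0, hc⟩
  | succ k ih =>
      intro turn h hc
      cases turn with
      | true =>
          rcases hc with hterm | ⟨v, hv, hc⟩
          · exact ⟨[], Nat.zero_le _, hterm⟩
          · obtain ⟨l, hl1, hl2⟩ := ih false (v :: h) hc
            refine ⟨l ++ [v], by simpa using hl1, ?_⟩
            simpa [List.append_assoc] using hl2
      | false =>
          by_cases hex : ∃ v, legal h v
          · obtain ⟨v, hv⟩ := hex
            obtain ⟨l, hl1, hl2⟩ := ih true (v :: h) (hc v hv)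
            refine ⟨l ++ [v], by simpa using hl1, ?_⟩
            simpa [List.append_assoc] using hl2
          · exact ⟨[], Nat.zero_le _, fun v hv => hex ⟨v, hv⟩⟩

lemma card_sdiff_cons_lt {V : Type*} [DecidableEq V] {S : Finset V} {h : List V}
    {u : V} (huS : u ∈ S) (huh : u ∉ h) :
    (S \ (u :: h).toFinset).card < (S \ h.toFinset).card := by
  have h1 : (u :: h).toFinset = insert u h.toFinset := List.toFinset_cons
  rw [h1, Finset.sdiff_insert]
  exact Finset.card_erase_lt_of_mem
    (Finset.mem_sdiff.mpr ⟨huS, fun hc => huh (List.mem_toFinset.mp hc)⟩)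

lemma card_sdiff_cons_le {V : Type*} [DecidableEq V] (S : Finset V) (h : List V)
    (v : V) : (S \ (v :: h).toFinset).card ≤ (S \ h.toFinset).card := by
  apply Finset.card_le_card
  apply Finset.sdiff_subset_sdiff (le_refl S)
  intro x hx
  rw [List.toFinset_cons]
  exact Finset.mem_insert_of_mem hx

/-- Dominator's strategy: always play an unplayed legal vertex of a fixed total
dominating set `S`. -/
lemma dominator_strategy {V : Type*} [DecidableEq V] {G : SimpleGraph V}
    {S : Finset V} (hS : ∀ v : V, ∃ u ∈ S, G.Adj u v) :
    ∀ (m : ℕ) (h : List V), (S \ h.toFinset).card ≤ m →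
      canEnd (lLegal G ∅) (2 * m - 1) true h ∧
      canEnd (lLegal G ∅) (2 * m) false h := by
  intro m
  induction m with
  | zero =>
      intro h hc
      have hsub : ∀ u ∈ S, u ∈ h := by
        intro u huS
        by_contra huh
        have : u ∈ S \ h.toFinset :=
          Finset.mem_sdiff.mpr ⟨huS, fun hcm => huh (List.mem_toFinset.mp hcm)⟩
        have := Finset.card_pos.mpr ⟨u, this⟩
        omega
      have hterm := no_legal_of_subset hS hsub
      exact ⟨hterm, hterm⟩
  | succ m ih =>
      have B : ∀ h : List V, (S \ h.toFinset).card ≤ m + 1 →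
          canEnd (lLegal G ∅) (2 * (m + 1) - 1) true h := by
        intro h hc
        rw [show 2 * (m + 1) - 1 = 2 * m + 1 from by omega]
        by_cases hex : ∃ v, lLegal G ∅ h v
        · obtain ⟨v, hv⟩ := hex
          obtain ⟨u, huS, huh, hu⟩ := exists_legal_in_S hS hv
          have hcard' : (S \ (u :: h).toFinset).card ≤ m := by
            have := card_sdiff_cons_lt huS huh
            omega
          exact Or.inr ⟨u, hu, (ih (u :: h) hcard').2⟩
        · exact Or.inl (fun v hv => hex ⟨v, hv⟩)
      intro h hc
      refine ⟨B h hc, ?_⟩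
      rw [show 2 * (m + 1) = (2 * (m + 1) - 1) + 1 from by omega]
      intro v hv
      exact B (v :: h) (le_trans (card_sdiff_cons_le S h v) hc)

/-- `γ_t(G) ≤ γ_Lg(G) ≤ 2γ_t(G) − 1`. -/
theorem gammaLg_bounds {V : Type*} [Fintype V] (G : SimpleGraph V)
    (hG : isolateFree G) :
    totDomNum G ≤ gammaLg G ∧ gammaLg G ≤ 2 * totDomNum G - 1 := by
  classical
  have hne : {k | ∃ S : Finset V, S.card = k ∧ ∀ v : V, ∃ u ∈ S, G.Adj u v}.Nonempty := by
    refine ⟨Finset.univ.card, Finset.univ, rfl, fun v => ?_⟩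
    obtain ⟨u, hu⟩ := hG v
    exact ⟨u, Finset.mem_univ u, hu.symm⟩
  have hmemS : totDomNum G ∈
      {k | ∃ S : Finset V, S.card = k ∧ ∀ v : V, ∃ u ∈ S, G.Adj u v} :=
    Nat.sInf_mem hne
  obtain ⟨S, hScard, hSdom⟩ := hmemS
  have hcard0 : (S \ ([] : List V).toFinset).card ≤ totDomNum G := by
    simp [hScard]
  have hmem : canEnd (lLegal G ∅) (2 * totDomNum G - 1) true [] :=
    (dominator_strategy hSdom (totDomNum G) [] hcard0).1
  have hub : gammaLg G ≤ 2 * totDomNum G - 1 := by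
    have : gameVal (lLegal G ∅) true ≤ 2 * totDomNum G - 1 := Nat.sInf_le hmem
    simpa [gammaLg, gammaLgA] using this
  have hval : canEnd (lLegal G ∅) (gammaLg G) true [] := by
    have : gameVal (lLegal G ∅) true ∈ {k | canEnd (lLegal G ∅) k true []} :=
      Nat.sInf_mem ⟨_, hmem⟩
    simpa [gammaLg, gammaLgA, gameVal] using this
  obtain ⟨l, hlen, hterm⟩ := canEnd_terminal (lLegal G ∅) (gammaLg G) true [] hval
  rw [List.append_nil] at hterm
  have hdom : ∀ w : V, ∃ u ∈ l.toFinset, G.Adj u w := terminal_dominates hG hterm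
  have hlb : totDomNum G ≤ l.toFinset.card := Nat.sInf_le ⟨l.toFinset, rfl, hdom⟩
  exact ⟨le_trans hlb (le_trans l.toFinset_card_le hlen), hub⟩
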